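/- For all integers n with u_n ≠ 0 and n ∉ {-1, 0}, v_{-n} = (u_{2n} v_n - u_{3n}) / (t^n u_n). -/

import Mathlib

open Matrix

lemma seq_unique (r s t : ℂ) (ht : t ≠ 0) (w : ℤ → ℂ)
    (hw : ∀ n : ℤ, w n = r * w (n-1) + s * w (n-2) + t * w (n-3))
    (h0 : w 0 = 0) (h1 : w 1 = 0) (h2 : w 2 = 0) : ∀ n, w n = 0 := by
  have key : ∀ m : ℤ, w m = 0 ∧ w (m+1) = 0 ∧ w (m+2) = 0 := by
    intro m
    induction m using Int.induction_on with
    | zero => exact ⟨h0, h1, h2⟩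
    | succ k ih =>
      obtain ⟨a, b, c⟩ := ih
      have h := hw ((k:ℤ)+3)
      rw [show (k:ℤ)+3-1 = k+2 by ring, show (k:ℤ)+3-2 = k+1 by ring,
        show (k:ℤ)+3-3 = k by ring, a, b, c] at h
      refine ⟨by rwa [show ((k:ℤ)+1) = k+1 by ring], ?_, ?_⟩
      · rwa [show ((k:ℤ)+1+1) = k+2 by ring]
      · rw [show ((k:ℤ)+1+2) = k+3 by ring]
        simpa using h
    | pred k ih =>
      obtain ⟨a, b, c⟩ := ih
      have h := hw (-(k:ℤ)+2)
      rw [show -(k:ℤ)+2-1 = -k+1 by ring, show -(k:ℤ)+2-2 = -k by ring,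
        show -(k:ℤ)+2-3 = -k-1 by ring, a, b, c] at h
      have hz : w (-(k:ℤ)-1) = 0 := by
        simp only [mul_zero, zero_add] at h
        replace h := mul_eq_zero.mp h.symm
        rcases h with h | h
        · exact absurd h ht
        · exact h
      exact ⟨hz, by rwa [show (-(k:ℤ)-1+1) = -(k:ℤ) by ring],
        by rwa [show (-(k:ℤ)-1+2) = -(k:ℤ)+1 by ring]⟩
  intro n; exact (key n).1

set_option maxHeartbeats 1000000 in
lemma ch3 (A : Matrix (Fin 3) (Fin 3) ℂ) :
    A ^ 3 = A.trace • A ^ 2 - A.adjugate.trace • A + A.det • (1 : Matrix (Fin 3) (Fin 3) ℂ) := by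
  ext i j
  fin_cases i <;> fin_cases j <;>
    simp [pow_succ, Matrix.mul_apply, Fin.sum_univ_succ, Matrix.trace_fin_three,
      Matrix.adjugate_fin_three, Matrix.det_fin_three, Matrix.one_apply] <;> ring

theorem stmt_17 (r s t : ℂ) (ht : t ≠ 0)
    (u v : ℤ → ℂ)
    (hu : ∀ n : ℤ, u n = r * u (n-1) + s * u (n-2) + t * u (n-3))
    (hu0 : u 0 = 0) (hu1 : u 1 = 1) (hu2 : u 2 = r)
    (hv : ∀ n : ℤ, v n = r * v (n-1) + s * v (n-2) + t * v (n-3))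
    (hv0 : v 0 = 3) (hv1 : v 1 = r) (hv2 : v 2 = r ^ 2 + 2 * s) :
    ∀ n : ℤ, n ≠ -1 → n ≠ 0 → u n ≠ 0 →
      v (-n) = (u (2 * n) * v n - u (3 * n)) / (t ^ n * u n) := by
  intro n hn1 hn0 hun
  have htn : (t : ℂ) ^ n ≠ 0 := zpow_ne_zero n ht
  set M : Matrix (Fin 3) (Fin 3) ℂ := !![r, s, t; 1, 0, 0; 0, 1, 0] with hM
  have hdet : M.det = t := by
    rw [hM, Matrix.det_fin_three]
    simp [Matrix.vecHead, Matrix.vecTail]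
  have hMu : IsUnit M := (Matrix.isUnit_iff_isUnit_det M).mpr (by rw [hdet]; exact ht.isUnit)
  obtain ⟨Mu, hMuv⟩ := hMu
  set E : ℤ → Matrix (Fin 3) (Fin 3) ℂ := fun k => ((Mu ^ k : _ˣ) : Matrix (Fin 3) (Fin 3) ℂ)
    with hE
  have hEmul : ∀ a b : ℤ, E (a + b) = E a * E b := by
    intro a b
    show ((Mu ^ (a+b) : _ˣ) : Matrix (Fin 3) (Fin 3) ℂ) = _
    rw [_root_.zpow_add, Units.val_mul]
  have hE0 : E 0 = 1 := by simp [hE]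
  have hE1 : E 1 = M := by simp [hE, hMuv]
  have hE2 : E 2 = M ^ 2 := by
    have := hEmul 1 1; rw [hE1] at this; rw [show (2:ℤ) = 1+1 by norm_num, this, sq]
  have hM3 : M ^ 3 = r • M ^ 2 + s • M + t • 1 := by
    ext i j; fin_cases i <;> fin_cases j <;>
      simp [hM, pow_succ, Matrix.mul_apply, Fin.sum_univ_succ, Matrix.one_apply] <;> ring
  have hE3 : E 3 = M ^ 3 := by
    have := hEmul 2 1; rw [hE1, hE2] at this
    rw [show (3:ℤ) = 2+1 by norm_num, this, show M^3 = M^2*M from pow_succ _ 2]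
  have hErec : ∀ k : ℤ, E k = r • E (k-1) + s • E (k-2) + t • E (k-3) := by
    intro k
    have h3 : E k = E (k-3) * M ^ 3 := by
      have := hEmul (k-3) 3; rw [hE3] at this
      rw [show k-3+3 = k by ring] at this; exact this
    have h2 : E (k-1) = E (k-3) * M ^ 2 := by
      have := hEmul (k-3) 2; rw [hE2] at this
      rw [show k-3+2 = k-1 by ring] at this; exact this
    have h1 : E (k-2) = E (k-3) * M := by
      have := hEmul (k-3) 1; rw [hE1] at this
      rw [show k-3+1 = k-2 by ring] at this; exact this
    rw [h3, hM3, Matrix.mul_add, Matrix.mul_add, Matrix.mul_smul, Matrix.mul_smul,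
      Matrix.mul_smul, Matrix.mul_one, ← h2, ← h1]
  have hveq : ∀ k : ℤ, (E k).trace = v k := by
    have key := seq_unique r s t ht (fun k => (E k).trace - v k) ?_ ?_ ?_ ?_
    · intro k; have := key k; linear_combination this
    · intro k
      rw [hErec k, hv k, Matrix.trace_add, Matrix.trace_add, Matrix.trace_smul,
        Matrix.trace_smul, Matrix.trace_smul]
      simp only [smul_eq_mul]; ring
    · show (E 0).trace - v 0 = 0
      rw [hE0, hv0, Matrix.trace_one]; norm_num
    · show (E 1).trace - v 1 = 0
      rw [hE1, hv1, hM, Matrix.trace_fin_three]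
      simp [Matrix.vecHead, Matrix.vecTail]
    · show (E 2).trace - v 2 = 0
      rw [hE2, hv2, pow_two, hM, Matrix.trace_fin_three]
      simp [Matrix.mul_apply, Fin.sum_univ_succ, Matrix.vecHead, Matrix.vecTail]
      ring
  have hueq : ∀ k : ℤ, (E k) 1 0 = u k := by
    have key := seq_unique r s t ht (fun k => (E k) 1 0 - u k) ?_ ?_ ?_ ?_
    · intro k; have := key k; linear_combination this
    · intro k
      rw [hErec k, hu k]
      simp only [Matrix.add_apply, Matrix.smul_apply, smul_eq_mul]; ring
    · show (E 0) 1 0 - u 0 = 0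
      rw [hE0, hu0]; simp [Matrix.one_apply]
    · show (E 1) 1 0 - u 1 = 0
      rw [hE1, hu1, hM]; simp
    · show (E 2) 1 0 - u 2 = 0
      rw [hE2, hu2, pow_two, hM]
      simp [Matrix.mul_apply, Fin.sum_univ_succ, Matrix.vecHead, Matrix.vecTail]
  have hA2 : E n * E n = E (2*n) := by
    have := hEmul n n; rw [show n+n = 2*n by ring] at this; exact this.symm
  have hA3 : E n * E n * E n = E (3*n) := by
    have := hEmul (2*n) n; rw [show 2*n+n = 3*n by ring, ← hA2] at this; exact this.symm
  have hInv : E (-n) * E n = 1 := by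
    have := hEmul (-n) n; rw [show -n+n = (0:ℤ) by ring, hE0] at this; exact this.symm
  have hdetA : (E n).det = t ^ n := by
    have h1 : (E n).det = ((Units.map (Matrix.detMonoidHom) (Mu ^ n) : ℂˣ) : ℂ) := rfl
    rw [h1, map_zpow, Units.val_zpow_eq_zpow_val]
    have h2 : ((Units.map (Matrix.detMonoidHom) Mu : ℂˣ) : ℂ) = t := by
      show (Mu : Matrix (Fin 3) (Fin 3) ℂ).det = t
      rw [hMuv, hdet]
    rw [h2]
  have hadjA : (E n).adjugate = t ^ n • E (-n) := by
    calc (E n).adjugate = (E (-n) * E n) * (E n).adjugate := by rw [hInv, Matrix.one_mul]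
      _ = E (-n) * ((E n) * (E n).adjugate) := by rw [Matrix.mul_assoc]
      _ = E (-n) * ((E n).det • 1) := by rw [Matrix.mul_adjugate]
      _ = t ^ n • E (-n) := by rw [hdetA, Matrix.mul_smul, Matrix.mul_one]
  have hadjtr : (E n).adjugate.trace = t ^ n * v (-n) := by
    rw [hadjA, Matrix.trace_smul, smul_eq_mul, hveq]
  have hch := ch3 (E n)
  rw [show (E n)^3 = E n * E n * E n by rw [show (E n)^3 = (E n)^2 * E n from pow_succ _ 2, pow_two],
    show (E n)^2 = E n * E n from pow_two _,
    hA3, hA2, hdetA, hadjtr, hveq n] at hch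
  have hentry := congrFun (congrFun hch 1) 0
  simp only [Matrix.sub_apply, Matrix.add_apply, Matrix.smul_apply, smul_eq_mul,
    hueq] at hentry
  rw [Matrix.one_apply_ne (by decide : (1 : Fin 3) ≠ 0)] at hentry
  rw [eq_div_iff (mul_ne_zero htn hun)]
  linear_combination hentry
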